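/- Large-distance asymptotic of the Kretschmann invariant: for every k̃ ∈ ℝ, lim_{ρ→+∞} ρ⁶ · K(ρ) = 12 (k̃² + 1) r_s². -/

import Mathlib

open Real Filter Topology

/-- Large-distance asymptotic of the Kretschmann invariant:
`lim_{ρ→+∞} ρ⁶·K(ρ) = 12 (k̃² + 1) r_s²`. -/
theorem kretschmann_large_distance
    (rs kt : ℝ) (hrs : 0 < rs)
    (ζ : ℝ) (hζ : ζ = Real.sqrt (1 + 3 * kt ^ 2))
    (K : ℝ → ℝ)
    (hK : ∀ ρ : ℝ, 0 < ρ → ρ ≠ rs → K ρ =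
      (2 / (ζ ^ 8 * rs ^ 4)) *
        (1 - Real.sign (1 - rs / ρ) * |1 - rs / ρ| ^ ζ) ^ 6 *
        |1 - rs / ρ| ^ (2 - 4 * ζ - 2 * kt) *
        (4 * kt ^ 2 * (kt + 1) * Real.sign (1 - rs / ρ) * |1 - rs / ρ| ^ ζ +
          ζ * (4 * kt ^ 3 - 5 * kt ^ 2 - 3) * (1 - |1 - rs / ρ| ^ (2 * ζ)) +
          (9 * kt ^ 4 - 2 * kt ^ 3 + 10 * kt ^ 2 + 3) * (1 + |1 - rs / ρ| ^ (2 * ζ)))) :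
    Tendsto (fun ρ : ℝ => ρ ^ 6 * K ρ) atTop (𝓝 (12 * (kt ^ 2 + 1) * rs ^ 2)) := by
  have hbase : (0:ℝ) < 1 + 3 * kt ^ 2 := by positivity
  have hζsq : ζ ^ 2 = 1 + 3 * kt ^ 2 := by rw [hζ, sq_sqrt hbase.le]
  have hζpos : 0 < ζ := by rw [hζ]; exact Real.sqrt_pos.mpr hbase
  -- limit A : ρ * (1 - (1 - rs/ρ)^ζ) → ζ * rs
  have hA : Tendsto (fun ρ : ℝ => ρ * (1 - (1 - rs / ρ) ^ ζ)) atTop (𝓝 (ζ * rs)) := by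
    have hderiv : HasDerivAt (fun t : ℝ => (1 - t) ^ ζ) (-ζ) 0 := by
      have h1 : HasDerivAt (fun x : ℝ => x ^ ζ) ζ ((1:ℝ) - 0) := by
        have := Real.hasDerivAt_rpow_const (x := (1:ℝ)) (p := ζ) (Or.inl one_ne_zero)
        simpa using this
      have h2 : HasDerivAt (fun t : ℝ => 1 - t) (-1) 0 := by
        simpa using (hasDerivAt_id' (0:ℝ)).const_sub (1:ℝ)
      have h3 := h1.comp 0 h2
      simpa [Function.comp_def] using h3
    have hslope := hasDerivAt_iff_tendsto_slope.mp hderiv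
    have ht0 : Tendsto (fun ρ : ℝ => rs / ρ) atTop (𝓝[≠] 0) := by
      rw [tendsto_nhdsWithin_iff]
      constructor
      · exact tendsto_const_nhds.div_atTop tendsto_id
      · filter_upwards [eventually_gt_atTop 0] with ρ hρ
        exact ne_of_gt (div_pos hrs hρ)
    have hcomp := hslope.comp ht0
    have h4 : Tendsto (fun ρ : ℝ => rs * -(slope (fun t : ℝ => (1 - t) ^ ζ) 0 (rs / ρ)))
        atTop (𝓝 (rs * -(-ζ))) := tendsto_const_nhds.mul hcomp.neg
    rw [show rs * -(-ζ) = ζ * rs by ring] at h4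
    refine h4.congr' ?_
    filter_upwards [eventually_gt_atTop 0] with ρ hρ
    have ht : rs / ρ ≠ 0 := ne_of_gt (div_pos hrs hρ)
    simp only [slope_def_field, div_sub_div_same]
    field_simp
    rw [sub_zero, one_rpow, mul_zero, sub_zero, mul_div_cancel_left₀ _ hrs.ne']
    ring
  -- x → 1
  have hx : Tendsto (fun ρ : ℝ => 1 - rs / ρ) atTop (𝓝 1) := by
    have h0 : Tendsto (fun ρ : ℝ => rs / ρ) atTop (𝓝 0) :=
      tendsto_const_nhds.div_atTop tendsto_id
    simpa using tendsto_const_nhds.sub h0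
  have hrpow : ∀ e : ℝ, Tendsto (fun ρ : ℝ => (1 - rs / ρ) ^ e) atTop (𝓝 1) := by
    intro e
    have := hx.rpow_const (p := e) (Or.inl one_ne_zero)
    simpa using this
  -- bracket limit
  have hB : Tendsto (fun ρ : ℝ =>
      4 * kt ^ 2 * (kt + 1) * (1 - rs / ρ) ^ ζ +
        ζ * (4 * kt ^ 3 - 5 * kt ^ 2 - 3) * (1 - (1 - rs / ρ) ^ (2 * ζ)) +
        (9 * kt ^ 4 - 2 * kt ^ 3 + 10 * kt ^ 2 + 3) * (1 + (1 - rs / ρ) ^ (2 * ζ)))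
      atTop (𝓝 (4 * kt ^ 2 * (kt + 1) * 1 +
        ζ * (4 * kt ^ 3 - 5 * kt ^ 2 - 3) * (1 - 1) +
        (9 * kt ^ 4 - 2 * kt ^ 3 + 10 * kt ^ 2 + 3) * (1 + 1))) := by
    exact ((tendsto_const_nhds.mul (hrpow ζ)).add
      (tendsto_const_nhds.mul (tendsto_const_nhds.sub (hrpow (2 * ζ))))).add
      (tendsto_const_nhds.mul (tendsto_const_nhds.add (hrpow (2 * ζ))))
  -- full product
  have hfull : Tendsto (fun ρ : ℝ =>
      (2 / (ζ ^ 8 * rs ^ 4)) * (ρ * (1 - (1 - rs / ρ) ^ ζ)) ^ 6 *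
        (1 - rs / ρ) ^ (2 - 4 * ζ - 2 * kt) *
        (4 * kt ^ 2 * (kt + 1) * (1 - rs / ρ) ^ ζ +
          ζ * (4 * kt ^ 3 - 5 * kt ^ 2 - 3) * (1 - (1 - rs / ρ) ^ (2 * ζ)) +
          (9 * kt ^ 4 - 2 * kt ^ 3 + 10 * kt ^ 2 + 3) * (1 + (1 - rs / ρ) ^ (2 * ζ))))
      atTop (𝓝 ((2 / (ζ ^ 8 * rs ^ 4)) * (ζ * rs) ^ 6 * 1 *
        (4 * kt ^ 2 * (kt + 1) * 1 +
          ζ * (4 * kt ^ 3 - 5 * kt ^ 2 - 3) * (1 - 1) +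
          (9 * kt ^ 4 - 2 * kt ^ 3 + 10 * kt ^ 2 + 3) * (1 + 1)))) :=
    (((tendsto_const_nhds.mul (hA.pow 6)).mul (hrpow _)).mul hB)
  -- identify limit value
  have hval : (2 / (ζ ^ 8 * rs ^ 4)) * (ζ * rs) ^ 6 * 1 *
      (4 * kt ^ 2 * (kt + 1) * 1 +
        ζ * (4 * kt ^ 3 - 5 * kt ^ 2 - 3) * (1 - 1) +
        (9 * kt ^ 4 - 2 * kt ^ 3 + 10 * kt ^ 2 + 3) * (1 + 1)) =
      12 * (kt ^ 2 + 1) * rs ^ 2 := by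
    have hζne : ζ ≠ 0 := ne_of_gt hζpos
    have hrsne : rs ≠ 0 := ne_of_gt hrs
    field_simp
    linear_combination (-12 * (kt ^ 2 + 1)) * hζsq
  rw [hval] at hfull
  refine hfull.congr' ?_
  filter_upwards [eventually_gt_atTop rs, eventually_gt_atTop 0] with ρ hρ hρ0
  have hxpos : 0 < 1 - rs / ρ := by
    rw [sub_pos]
    exact (div_lt_one hρ0).mpr hρ
  rw [hK ρ hρ0 (ne_of_gt hρ)]
  rw [Real.sign_of_pos hxpos, abs_of_pos hxpos]
  ring
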